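/- Let f : (−1,0] → ℝ be a C¹ function with f ≤ 0 satisfying the Riccati equation f'(x) + f(x)² = 2(α + 2λx f(x))/(μ²(1−x²)²) on (−1,0]. Then f is unbounded below near −1, i.e., liminf_{x→−1⁺} f(x) = −∞. -/

import Mathlib

open Set Filter

/-- A nonpositive `C¹` solution of the Riccati equation
`f' + f² = 2(α + 2λx f)/(μ²(1−x²)²)` on `(−1,0]` is unbounded below near `−1`:
`liminf_{x→−1⁺} f(x) = −∞`, stated as: for every `C` we frequently have `f x < C`
as `x → −1⁺`. -/
theorem stmt8 (lam mu alp : ℝ) (hlam : 0 < lam) (hmu : 0 < mu) (halp : 0 < alp)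
    (f f' : ℝ → ℝ)
    (hd : ∀ x ∈ Set.Ioc (-1 : ℝ) 0, HasDerivAt f (f' x) x)
    (hneg : ∀ x ∈ Set.Ioc (-1 : ℝ) 0, f x ≤ 0)
    (hric : ∀ x ∈ Set.Ioc (-1 : ℝ) 0,
      f' x + (f x) ^ 2 = 2 * (alp + 2 * lam * x * f x) / (mu ^ 2 * (1 - x ^ 2) ^ 2)) :
    ∀ C : ℝ, ∃ᶠ x in nhdsWithin (-1 : ℝ) (Set.Ioi (-1 : ℝ)), f x < C := by
  intro C
  by_contra hcon
  rw [Filter.not_frequently] at hcon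
  rw [Filter.eventually_iff, mem_nhdsGT_iff_exists_Ioo_subset] at hcon
  obtain ⟨a', ha', hsub⟩ := hcon
  simp only [Set.mem_Ioi] at ha'
  -- choose a good right endpoint a
  set a : ℝ := min ((a' - 1) / 2) (-(1/2)) with ha_def
  have haa' : a < a' := lt_of_le_of_lt (min_le_left _ _) (by linarith)
  have ha1 : (-1 : ℝ) < a := lt_min (by linarith) (by norm_num)
  have ha0 : a ≤ 0 := le_trans (min_le_right _ _) (by norm_num)
  have haI : a ∈ Set.Ioc (-1 : ℝ) 0 := ⟨ha1, ha0⟩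
  set K : ℝ := alp / (2 * mu ^ 2) with hK_def
  have hKpos : 0 < K := by positivity
  have hKmul : K * (2 * mu ^ 2) = alp := by
    rw [hK_def, div_mul_cancel₀]; positivity
  set H : ℝ → ℝ := fun y => f y + K * (1 + y)⁻¹ + C ^ 2 * y with hH_def
  -- derivative of H
  have hHd : ∀ y ∈ Set.Ioc (-1 : ℝ) 0,
      HasDerivAt H (f' y + (-(K * ((1 + y) ^ 2)⁻¹)) + C ^ 2) y := by
    intro y hy
    have hy1 : (1 : ℝ) + y ≠ 0 := by have := hy.1; intro h; linarith [hy.1]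
    have h1 : HasDerivAt (fun z : ℝ => 1 + z) 1 y :=
      (hasDerivAt_id y).const_add 1
    have h2 : HasDerivAt (fun z : ℝ => (1 + z)⁻¹) (-1 / (1 + y) ^ 2) y := h1.inv hy1
    have h3 : HasDerivAt (fun z : ℝ => K * (1 + z)⁻¹) (K * (-1 / (1 + y) ^ 2)) y :=
      h2.const_mul K
    have h4 : HasDerivAt (fun z : ℝ => C ^ 2 * z) (C ^ 2) y := by
      simpa using (hasDerivAt_id y).const_mul (C ^ 2)
    have := ((hd y hy).add h3).add h4
    refine this.congr_deriv ?_
    ring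
  -- nonnegativity of H' where C ≤ f
  have hH'nonneg : ∀ y ∈ Set.Ioc (-1 : ℝ) 0, C ≤ f y →
      0 ≤ f' y + (-(K * ((1 + y) ^ 2)⁻¹)) + C ^ 2 := by
    intro y hy hCy
    have hy1 : (-1 : ℝ) < y := hy.1
    have hy0 : y ≤ 0 := hy.2
    have hfy : f y ≤ 0 := hneg y hy
    have hD : (0 : ℝ) < mu ^ 2 * (1 - y ^ 2) ^ 2 := by
      have h12 : (0:ℝ) < 1 - y ^ 2 := by nlinarith
      exact mul_pos (pow_pos hmu 2) (pow_pos h12 2)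
    have h1y : (0 : ℝ) < (1 + y) ^ 2 := pow_pos (by linarith) 2
    have hnum : 2 * alp ≤ 2 * (alp + 2 * lam * y * f y) := by
      nlinarith [mul_nonneg (neg_nonneg.2 hy0) (neg_nonneg.2 hfy)]
    have hge : K * ((1 + y) ^ 2)⁻¹ ≤ 2 * (alp + 2 * lam * y * f y) / (mu ^ 2 * (1 - y ^ 2) ^ 2) := by
      rw [← div_eq_mul_inv, div_le_div_iff₀ h1y hD]
      have key : K * (mu ^ 2 * (1 - y ^ 2) ^ 2) ≤ 2 * alp * (1 + y) ^ 2 := by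
        have h2 : (1 - y ^ 2) ^ 2 = (1 - y) ^ 2 * (1 + y) ^ 2 := by ring
        have h3 : (1 - y) ^ 2 ≤ 4 := by nlinarith
        nlinarith [hKpos, mul_pos (mul_pos hKpos (by positivity : (0:ℝ) < mu ^ 2)) h1y]
      calc K * (mu ^ 2 * (1 - y ^ 2) ^ 2) ≤ 2 * alp * (1 + y) ^ 2 := key
        _ ≤ 2 * (alp + 2 * lam * y * f y) * (1 + y) ^ 2 := by
            nlinarith [mul_nonneg (neg_nonneg.2 hy0) (neg_nonneg.2 hfy)]
    have hsq : f y ^ 2 ≤ C ^ 2 := by nlinarith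
    have := hric y hy
    have hf' : f' y = 2 * (alp + 2 * lam * y * f y) / (mu ^ 2 * (1 - y ^ 2) ^ 2) - f y ^ 2 := by
      linarith
    linarith
  -- choose x close to -1
  set M : ℝ := max (f a + K * (1 + a)⁻¹ + C ^ 2 - C) 0 + 1 with hM_def
  have hMpos : (0 : ℝ) < M := by
    have := le_max_right (f a + K * (1 + a)⁻¹ + C ^ 2 - C) 0
    simp [hM_def]; positivity
  set t : ℝ := min ((1 + a) / 2) (K / M) with ht_def
  have htpos : 0 < t := lt_min (by linarith) (div_pos hKpos hMpos)
  set x : ℝ := -1 + t with hx_def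
  have hx1 : (-1 : ℝ) < x := by simp only [hx_def]; linarith
  have hxa : x < a := by
    have : t ≤ (1 + a) / 2 := min_le_left _ _
    simp only [hx_def]; linarith
  have hxI : Set.Icc x a ⊆ Set.Ioc (-1 : ℝ) 0 :=
    fun y hy => ⟨lt_of_lt_of_le hx1 hy.1, le_trans hy.2 ha0⟩
  have hxA' : Set.Icc x a ⊆ Set.Ioo (-1 : ℝ) a' :=
    fun y hy => ⟨lt_of_lt_of_le hx1 hy.1, lt_of_le_of_lt hy.2 haa'⟩
  have hCf : ∀ y ∈ Set.Icc x a, C ≤ f y := fun y hy => not_lt.1 (hsub (hxA' hy))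
  have hmono : MonotoneOn H (Set.Icc x a) := by
    apply monotoneOn_of_deriv_nonneg (convex_Icc x a)
    · intro y hy
      exact (hHd y (hxI hy)).continuousAt.continuousWithinAt
    · intro y hy
      rw [interior_Icc] at hy
      exact ((hHd y (hxI (Set.mem_Icc_of_Ioo hy))).differentiableAt).differentiableWithinAt
    · intro y hy
      rw [interior_Icc] at hy
      have hy' := hxI (Set.mem_Icc_of_Ioo hy)
      rw [(hHd y hy').deriv]
      exact hH'nonneg y hy' (hCf y (Set.mem_Icc_of_Ioo hy))
  have hxmem : x ∈ Set.Icc x a := ⟨le_refl x, le_of_lt hxa⟩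
  have hamem : a ∈ Set.Icc x a := ⟨le_of_lt hxa, le_refl a⟩
  have hHle : f x + K * (1 + x)⁻¹ + C ^ 2 * x ≤ f a + K * (1 + a)⁻¹ + C ^ 2 * a :=
    hmono hxmem hamem (le_of_lt hxa)
  have h1x : 1 + x = t := by simp only [hx_def]; ring
  have hKt : M ≤ K * t⁻¹ := by
    rw [← div_eq_mul_inv, le_div_iff₀ htpos]
    have ht2 : t ≤ K / M := min_le_right _ _
    calc M * t ≤ M * (K / M) := mul_le_mul_of_nonneg_left ht2 hMpos.le
      _ = K := by field_simp
  have hM1 : f a + K * (1 + a)⁻¹ + C ^ 2 - C ≤ M - 1 := by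
    have := le_max_left (f a + K * (1 + a)⁻¹ + C ^ 2 - C) 0
    simp only [hM_def]; linarith
  have hfx : C ≤ f x := hCf x hxmem
  have hxneg : x ≤ 0 := le_trans (le_of_lt hxa) ha0
  rw [h1x] at hHle
  have hC2a : C ^ 2 * a ≤ 0 := mul_nonpos_of_nonneg_of_nonpos (sq_nonneg C) ha0
  have hC2x : -(C ^ 2 * x) ≤ C ^ 2 := by
    have hx2 : -x ≤ 1 := by linarith
    have h5 := mul_le_mul_of_nonneg_left hx2 (sq_nonneg C)
    linarith
  clear_value a K M t x
  linarith [hHle, hKt, hM1, hfx, hC2a, hC2x]
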